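/- For integer n ≥ 1 and nonnegative integers m, k, the coefficient h(k) = (k!/Γ(n+k)) ∫_0^∞ x^{n-1} e^{-2x} (L_m^{(n-1)}(x))² L_k^{(n-1)}(x) dx equals (2^{-n}/Γ(n)) Σ_{l=0}^{2m} 2^{-l} σ_l (Γ(n+l)/l!) ₂F₁(-k, n+l; n; 1/2), where σ_l = (-1)^l Σ_{i=0}^l binomial(l,i) binomial(n+m-1, m-l+i) binomial(n+m-1, m-i). -/

import Mathlib

open scoped BigOperators
open MeasureTheory Real

noncomputable def genBinom (a : ℝ) (k : ℕ) : ℝ :=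
  (∏ i ∈ Finset.range k, (a - i)) / (Nat.factorial k)

noncomputable def lag (j : ℕ) (α : ℝ) (x : ℝ) : ℝ :=
  ∑ i ∈ Finset.range (j + 1),
    (-1 : ℝ) ^ i * genBinom ((j : ℝ) + α) (j - i) * x ^ i / (Nat.factorial i)

noncomputable def poch (a : ℝ) (i : ℕ) : ℝ := ∏ t ∈ Finset.range i, (a + t)

/-- Terminating Gauss hypergeometric sum `₂F₁(-k, b; c; x)`. -/
noncomputable def hyp2F1 (k : ℕ) (b c x : ℝ) : ℝ :=
  ∑ i ∈ Finset.range (k + 1),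
    poch (-(k : ℝ)) i * poch b i / (poch c i * (Nat.factorial i)) * x ^ i

def chooseZ (a : ℕ) (k : ℤ) : ℕ :=
  if k < 0 then 0 else a.choose k.toNat

noncomputable def sigma' (n m l : ℕ) : ℝ :=
  (-1 : ℝ) ^ l *
    ∑ i ∈ Finset.range (l + 1),
      (Nat.choose l i) * (chooseZ (n + m - 1) ((m : ℤ) - l + i)) * (chooseZ (n + m - 1) ((m : ℤ) - i))

/-! ### Auxiliary lemmas -/

lemma prod_range_cast_sub (N k : ℕ) :
    (∏ i ∈ Finset.range k, ((N:ℝ) - i)) = (N.descFactorial k : ℝ) := by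
  induction k with
  | zero => simp
  | succ k ih =>
    rw [Finset.prod_range_succ, ih, Nat.descFactorial_succ]
    rcases le_or_gt k N with h | h
    · push_cast [Nat.cast_sub h]; ring
    · rw [Nat.descFactorial_eq_zero_iff_lt.2 h]
      simp [Nat.sub_eq_zero_of_le h.le]

lemma genBinom_natCast (N k : ℕ) : genBinom (N:ℝ) k = (N.choose k : ℝ) := by
  rw [genBinom, prod_range_cast_sub, Nat.descFactorial_eq_factorial_mul_choose]
  push_cast
  rw [mul_comm, mul_div_assoc, div_self (by positivity), mul_one]

lemma poch_neg_nat (k j : ℕ) :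
    poch (-(k:ℝ)) j = (-1:ℝ)^j * (k.descFactorial j : ℝ) := by
  rw [poch, ← prod_range_cast_sub]
  simp only [show ∀ t:ℕ, -(k:ℝ) + t = -1 * ((k:ℝ) - t) by intro t; ring]
  rw [Finset.prod_mul_distrib, Finset.prod_const, Finset.card_range]

lemma poch_fact (A : ℕ) (j : ℕ) :
    (A.factorial : ℝ) * poch ((A:ℝ)+1) j = ((A+j).factorial : ℝ) := by
  induction j with
  | zero => simp [poch]
  | succ j ih =>
    rw [poch, Finset.prod_range_succ, ← poch, ← mul_assoc, ih]
    have : A + (j+1) = (A+j) + 1 := by ring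
    rw [this]
    push_cast [Nat.factorial_succ]
    ring

lemma poch_pos {a : ℝ} (ha : 0 < a) (j : ℕ) : 0 < poch a j := by
  rw [poch]
  exact Finset.prod_pos fun t _ => by positivity

lemma coeff_aux (f : ℕ → ℝ) (M : ℕ) (hf : ∀ i, M ≤ i → f i = 0) (t : ℕ) :
    (∑ i ∈ Finset.range M, Polynomial.C (f i) * Polynomial.X ^ i).coeff t = f t := by
  rw [Polynomial.finset_sum_coeff]
  simp only [Polynomial.coeff_C_mul, Polynomial.coeff_X_pow]
  rcases lt_or_ge t M with h | h
  · rw [Finset.sum_eq_single t]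
    · simp
    · intro b _ hb; simp [Ne.symm hb]
    · intro hh; exact absurd (Finset.mem_range.2 h) hh
  · rw [hf t h, Finset.sum_eq_zero]
    intro b hb
    rw [Finset.mem_range] at hb
    have : ¬ (t = b) := by omega
    simp [this]

lemma poly_mul_expand (f g : ℕ → ℝ) (M : ℕ) (hM : 0 < M)
    (hf : ∀ i, M ≤ i → f i = 0) (hg : ∀ i, M ≤ i → g i = 0) (x : ℝ) :
    (∑ i ∈ Finset.range M, f i * x ^ i) * (∑ j ∈ Finset.range M, g j * x ^ j)
      = ∑ l ∈ Finset.range (2 * M), (∑ i ∈ Finset.range (l + 1), f i * g (l - i)) * x ^ l := by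
  classical
  set p : Polynomial ℝ := ∑ i ∈ Finset.range M, Polynomial.C (f i) * Polynomial.X ^ i with hp
  set q : Polynomial ℝ := ∑ i ∈ Finset.range M, Polynomial.C (g i) * Polynomial.X ^ i with hq
  have hpc : ∀ t, p.coeff t = f t := coeff_aux f M hf
  have hqc : ∀ t, q.coeff t = g t := coeff_aux g M hg
  have hpd : p.natDegree < M := by
    rw [hp]
    have := Polynomial.natDegree_sum_le_of_forall_le (Finset.range M)
      (fun i => Polynomial.C (f i) * Polynomial.X ^ i) (n := M - 1) ?_
    · omega
    · intro i hi
      refine le_trans (Polynomial.natDegree_C_mul_le _ _) ?_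
      rw [Polynomial.natDegree_X_pow]
      exact Nat.le_pred_of_lt (Finset.mem_range.1 hi)
  have hqd : q.natDegree < M := by
    rw [hq]
    have := Polynomial.natDegree_sum_le_of_forall_le (Finset.range M)
      (fun i => Polynomial.C (g i) * Polynomial.X ^ i) (n := M - 1) ?_
    · omega
    · intro i hi
      refine le_trans (Polynomial.natDegree_C_mul_le _ _) ?_
      rw [Polynomial.natDegree_X_pow]
      exact Nat.le_pred_of_lt (Finset.mem_range.1 hi)
  have hmd : (p * q).natDegree < 2 * M := by
    refine lt_of_le_of_lt (Polynomial.natDegree_mul_le) ?_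
    omega
  have h1 : Polynomial.eval x p = ∑ i ∈ Finset.range M, f i * x ^ i := by
    rw [hp, Polynomial.eval_finset_sum]
    refine Finset.sum_congr rfl fun i _ => ?_
    simp
  have h2 : Polynomial.eval x q = ∑ i ∈ Finset.range M, g i * x ^ i := by
    rw [hq, Polynomial.eval_finset_sum]
    refine Finset.sum_congr rfl fun i _ => ?_
    simp
  rw [← h1, ← h2, ← Polynomial.eval_mul]
  rw [Polynomial.eval_eq_sum_range' hmd]
  refine Finset.sum_congr rfl fun l _ => ?_
  congr 1
  rw [Polynomial.coeff_mul, Finset.Nat.sum_antidiagonal_eq_sum_range_succ_mk]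
  exact Finset.sum_congr rfl fun i _ => by rw [hpc, hqc]

/-- Extended Laguerre coefficients. -/
noncomputable def ec (A j : ℕ) (i : ℕ) : ℝ :=
  (-1:ℝ)^i * (chooseZ (A + j) ((j:ℤ) - i) : ℝ) / (Nat.factorial i)

lemma ec_zero (A j i : ℕ) (h : j + 1 ≤ i) : ec A j i = 0 := by
  rw [ec, chooseZ, if_pos (by omega)]
  simp

lemma chooseZ_of_le (a j i : ℕ) (h : i ≤ j) :
    chooseZ a ((j:ℤ) - i) = a.choose (j - i) := by
  rw [chooseZ, if_neg (by omega)]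
  congr 1
  omega

lemma lag_eq (A j : ℕ) (x : ℝ) :
    lag j (A:ℝ) x = ∑ i ∈ Finset.range (j+1), ec A j i * x^i := by
  rw [lag]
  refine Finset.sum_congr rfl fun i hi => ?_
  rw [Finset.mem_range] at hi
  have hij : i ≤ j := by omega
  have : (j : ℝ) + (A : ℝ) = ((A + j : ℕ) : ℝ) := by push_cast; ring
  rw [this, genBinom_natCast, ec, chooseZ_of_le (A+j) j i hij]
  ring

lemma inner_eq (A m l : ℕ) :
    (∑ i ∈ Finset.range (l+1), ec A m i * ec A m (l-i))
      = sigma' (A+1) m l / (Nat.factorial l) := by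
  have hnm : A + 1 + m - 1 = A + m := by omega
  rw [sigma', hnm]
  push_cast
  rw [Finset.mul_sum, Finset.sum_div]
  refine Finset.sum_congr rfl fun i hi => ?_
  rw [Finset.mem_range] at hi
  have hil : i ≤ l := by omega
  have h2 : (m:ℤ) - ((l-i:ℕ):ℤ) = (m:ℤ) - l + i := by
    push_cast [Nat.cast_sub hil]; ring
  have key : ec A m i * ec A m (l - i)
      = ((-1:ℝ)^i * (-1:ℝ)^(l-i)) *
          ((chooseZ (A+m) ((m:ℤ) - i) : ℝ) * (chooseZ (A+m) ((m:ℤ) - l + i) : ℝ)) /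
          ((Nat.factorial i : ℝ) * (Nat.factorial (l-i) : ℝ)) := by
    rw [ec, ec, h2]
    ring
  have h3 : (-1:ℝ)^i * (-1:ℝ)^(l-i) = (-1:ℝ)^l := by
    rw [← pow_add]; congr 1; omega
  have h4 : ((Nat.choose l i : ℝ)) * (Nat.factorial i : ℝ) * (Nat.factorial (l-i) : ℝ)
      = (Nat.factorial l : ℝ) := by
    exact_mod_cast congrArg (Nat.cast : ℕ → ℝ) (Nat.choose_mul_factorial_mul_factorial hil)
  rw [key, h3]
  have hi0 : (Nat.factorial i : ℝ) ≠ 0 := by positivity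
  have hi1 : (Nat.factorial (l-i) : ℝ) ≠ 0 := by positivity
  have hi2 : (Nat.factorial l : ℝ) ≠ 0 := by positivity
  field_simp
  linear_combination (-1 * (chooseZ (A+m) ((m:ℤ) - i) : ℝ) * (chooseZ (A+m) ((m:ℤ) - l + i) : ℝ)) * h4

lemma lag_sq (A m : ℕ) (x : ℝ) :
    (lag m (A:ℝ) x)^2
      = ∑ l ∈ Finset.range (2*m+1), (sigma' (A+1) m l / (Nat.factorial l)) * x^l := by
  rw [sq, lag_eq, poly_mul_expand (fun i => ec A m i) (fun i => ec A m i) (m+1)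
    (Nat.succ_pos m) (fun i hi => ec_zero A m i hi) (fun i hi => ec_zero A m i hi)]
  have h2 : 2 * (m+1) = (2*m+1) + 1 := by ring
  rw [h2, Finset.sum_range_succ]
  have htop : (∑ i ∈ Finset.range (2*m+1+1), ec A m i * ec A m (2*m+1 - i)) = 0 := by
    refine Finset.sum_eq_zero fun i hi => ?_
    rcases le_or_gt i m with h | h
    · rw [ec_zero A m (2*m+1-i) (by omega), mul_zero]
    · rw [ec_zero A m i (by omega), zero_mul]
  rw [htop, zero_mul, add_zero]
  exact Finset.sum_congr rfl fun l _ => by rw [inner_eq]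

lemma integrableOn_pow_exp (a : ℕ) :
    IntegrableOn (fun x : ℝ => x ^ a * Real.exp (-2 * x)) (Set.Ioi 0) volume := by
  have hg := Real.GammaIntegral_convergent (s := (a:ℝ) + 1) (by positivity)
  refine hg.mono' ?_ ?_
  · exact (Continuous.aestronglyMeasurable (by continuity)).restrict
  · filter_upwards [ae_restrict_mem measurableSet_Ioi] with x hx
    have hx0 : (0:ℝ) < x := hx
    have h1 : x ^ ((a:ℝ) + 1 - 1) = x ^ a := by
      rw [add_sub_cancel_right, Real.rpow_natCast]
    rw [h1, Real.norm_eq_abs, abs_of_nonneg (by positivity)]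
    have : Real.exp (-2 * x) ≤ Real.exp (-x) := by
      apply Real.exp_le_exp.2; linarith
    calc x ^ a * Real.exp (-2 * x) ≤ x ^ a * Real.exp (-x) := by
          apply mul_le_mul_of_nonneg_left this (by positivity)
      _ = Real.exp (-x) * x ^ a := by ring

lemma integral_pow_exp (a : ℕ) :
    ∫ x in Set.Ioi (0:ℝ), x ^ a * Real.exp (-2 * x)
      = (a.factorial : ℝ) / 2 ^ (a + 1) := by
  have h := Real.integral_rpow_mul_exp_neg_mul_Ioi (a := (a:ℝ) + 1) (r := 2)
    (by positivity) (by norm_num)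
  have heq : ∀ x ∈ Set.Ioi (0:ℝ),
      x ^ ((a:ℝ) + 1 - 1) * Real.exp (-(2 * x)) = x ^ a * Real.exp (-2 * x) := by
    intro x hx
    rw [add_sub_cancel_right, Real.rpow_natCast]
    ring_nf
  rw [setIntegral_congr_fun measurableSet_Ioi heq] at h
  rw [h]
  have h2 : ((a:ℝ) + 1) = ((a + 1 : ℕ) : ℝ) := by push_cast; ring
  rw [Real.Gamma_nat_eq_factorial, h2, Real.rpow_natCast]
  rw [div_pow, one_pow]
  ring

lemma term_eq (N k m l j : ℕ) (hj : j ≤ k) :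
    ((k.factorial:ℝ) / Real.Gamma ((N:ℝ)+1+k)) *
      ((sigma' (N+1) m l / (l.factorial:ℝ)) * ec N k j * (((N+l+j).factorial:ℝ) / 2 ^ (N+l+j+1)))
    = (2:ℝ) ^ (-((N:ℝ)+1)) / Real.Gamma ((N:ℝ)+1) *
        ((2:ℝ) ^ (-(l:ℝ)) * sigma' (N+1) m l * (Real.Gamma ((N:ℝ)+1+(l:ℝ)) / (l.factorial:ℝ)) *
          (poch (-(k:ℝ)) j * poch ((N:ℝ)+1+(l:ℝ)) j / (poch ((N:ℝ)+1) j * (j.factorial:ℝ)) * (1/2)^j)) := by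
  have g1 : Real.Gamma ((N:ℝ)+1+(k:ℝ)) = ((N+k).factorial : ℝ) := by
    rw [show (N:ℝ)+1+(k:ℝ) = ((N+k:ℕ):ℝ)+1 by push_cast; ring, Real.Gamma_nat_eq_factorial]
  have g2 : Real.Gamma ((N:ℝ)+1) = (N.factorial : ℝ) := Real.Gamma_nat_eq_factorial N
  have g3 : Real.Gamma ((N:ℝ)+1+(l:ℝ)) = ((N+l).factorial : ℝ) := by
    rw [show (N:ℝ)+1+(l:ℝ) = ((N+l:ℕ):ℝ)+1 by push_cast; ring, Real.Gamma_nat_eq_factorial]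
  have r1 : (2:ℝ) ^ (-((N:ℝ)+1)) = ((2:ℝ) ^ (N+1))⁻¹ := by
    rw [show -((N:ℝ)+1) = -(((N+1:ℕ)):ℝ) by push_cast; ring, Real.rpow_neg (by norm_num),
      Real.rpow_natCast]
  have r2 : (2:ℝ) ^ (-(l:ℝ)) = ((2:ℝ) ^ l)⁻¹ := by
    rw [Real.rpow_neg (by norm_num), Real.rpow_natCast]
  have hN0 : (N.factorial : ℝ) ≠ 0 := by positivity
  have hNl0 : ((N+l).factorial : ℝ) ≠ 0 := by positivity
  have e3 : poch ((N:ℝ)+1) j = ((N+j).factorial : ℝ) / (N.factorial : ℝ) := by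
    rw [eq_div_iff hN0, mul_comm]; exact poch_fact N j
  have e4 : poch ((N:ℝ)+1+(l:ℝ)) j = ((N+l+j).factorial : ℝ) / ((N+l).factorial : ℝ) := by
    rw [show (N:ℝ)+1+(l:ℝ) = ((N+l:ℕ):ℝ)+1 by push_cast; ring, eq_div_iff hNl0, mul_comm]
    exact poch_fact (N+l) j
  have e5 : (k.descFactorial j : ℝ) = (k.factorial : ℝ) / ((k-j).factorial : ℝ) := by
    rw [eq_div_iff (by positivity), mul_comm]
    exact_mod_cast Nat.factorial_mul_descFactorial hj
  have e6 : (((N+k).choose (k-j)) : ℝ) = ((N+k).factorial : ℝ) / (((k-j).factorial : ℝ) * ((N+j).factorial : ℝ)) := by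
    rw [eq_div_iff (by positivity), ← mul_assoc]
    have h := Nat.choose_mul_factorial_mul_factorial (show k - j ≤ N + k by omega)
    rw [show N + k - (k - j) = N + j by omega] at h
    exact_mod_cast h
  have e7 : ec N k j = (-1:ℝ)^j * (((N+k).choose (k-j)) : ℝ) / (j.factorial : ℝ) := by
    rw [ec, chooseZ_of_le (N+k) k j hj]
  rw [g1, g2, g3, r1, r2, e3, e4, e7, poch_neg_nat, e5, e6]
  have hj0 : (j.factorial : ℝ) ≠ 0 := by positivity
  have hkj0 : ((k-j).factorial : ℝ) ≠ 0 := by positivity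
  have hNj0 : ((N+j).factorial : ℝ) ≠ 0 := by positivity
  have hNlj0 : ((N+l+j).factorial : ℝ) ≠ 0 := by positivity
  have hNk0 : ((N+k).factorial : ℝ) ≠ 0 := by positivity
  field_simp
  have h2j : ((1:ℝ)/2)^j * 2^j = 1 := by rw [← mul_pow]; norm_num
  linear_combination (-(sigma' (N+1) m l * 2^N * 2^l * 2)) * h2j

lemma main_integral (N m k : ℕ) :
    (∫ x in Set.Ioi (0 : ℝ),
        x ^ (((N+1:ℕ) : ℝ) - 1) * Real.exp (-2 * x) * (lag m (((N+1:ℕ) : ℝ) - 1) x) ^ 2 *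
          lag k (((N+1:ℕ) : ℝ) - 1) x)
      = ∑ l ∈ Finset.range (2*m+1), ∑ j ∈ Finset.range (k+1),
          (sigma' (N+1) m l / (Nat.factorial l : ℝ)) * ec N k j *
            (((N+l+j).factorial : ℝ) / 2 ^ (N+l+j+1)) := by
  have hα : ((N+1:ℕ) : ℝ) - 1 = (N:ℝ) := by push_cast; ring
  have hfun : ∀ x : ℝ,
      x ^ (((N+1:ℕ) : ℝ) - 1) * Real.exp (-2 * x) * (lag m (((N+1:ℕ) : ℝ) - 1) x) ^ 2 *
          lag k (((N+1:ℕ) : ℝ) - 1) x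
        = ∑ l ∈ Finset.range (2*m+1), ∑ j ∈ Finset.range (k+1),
            (sigma' (N+1) m l / (Nat.factorial l : ℝ)) * ec N k j *
              (x ^ (N+l+j) * Real.exp (-2 * x)) := by
    intro x
    rw [hα, Real.rpow_natCast, lag_sq, lag_eq]
    rw [mul_assoc, Finset.sum_mul_sum, Finset.mul_sum]
    refine Finset.sum_congr rfl fun l _ => ?_
    rw [Finset.mul_sum]
    refine Finset.sum_congr rfl fun j _ => ?_
    rw [pow_add, pow_add]
    ring
  simp only [hfun]
  rw [integral_finset_sum]
  swap
  · intro l _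
    apply integrable_finset_sum
    intro j _
    exact ((integrableOn_pow_exp (N+l+j)).const_mul _)
  refine Finset.sum_congr rfl fun l _ => ?_
  rw [integral_finset_sum]
  swap
  · intro j _
    exact ((integrableOn_pow_exp (N+l+j)).const_mul _)
  refine Finset.sum_congr rfl fun j _ => ?_
  rw [MeasureTheory.integral_const_mul, integral_pow_exp]

theorem lagFourierCoeff_eq_hyp_sum (n : ℕ) (hn : 1 ≤ n) (m k : ℕ) :
    (Nat.factorial k / Real.Gamma ((n : ℝ) + k)) *
        ∫ x in Set.Ioi (0 : ℝ),
          x ^ ((n : ℝ) - 1) * Real.exp (-2 * x) * (lag m ((n : ℝ) - 1) x) ^ 2 *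
            lag k ((n : ℝ) - 1) x
      = (2 : ℝ) ^ (-(n : ℝ)) / Real.Gamma n *
          ∑ l ∈ Finset.range (2 * m + 1),
            (2 : ℝ) ^ (-(l : ℝ)) * sigma' n m l * (Real.Gamma ((n : ℝ) + l) / (Nat.factorial l)) *
              hyp2F1 k ((n : ℝ) + l) (n : ℝ) (1 / 2) := by
  obtain ⟨N, rfl⟩ : ∃ N, n = N + 1 := ⟨n - 1, (Nat.succ_pred_eq_of_pos hn).symm⟩
  rw [main_integral N m k]
  simp only [hyp2F1]
  rw [Finset.mul_sum]
  simp only [Finset.mul_sum]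
  refine Finset.sum_congr rfl fun l _ => ?_
  refine Finset.sum_congr rfl fun j hj => ?_
  rw [Finset.mem_range] at hj
  push_cast
  exact term_eq N k m l j (by omega)
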